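/- Let k ≥ 1 be an integer, α ∈ (0,1), and a, b, c, d ∈ (0,1) with a + b + c + d = 1. The function U(u) = (α + (1−α)u^k)^{k+1} / ( [ (a+b)(α + (1−α)u^k)^k + c ]·u^k + d·(α + (1−α)u^k)^k ), defined for u ≥ 0, is bounded and satisfies U(0) = α/d, lim_{u→+∞} U(u) < +∞, U(1) = 1, and U′(1) = k·( kc + d − α(kc + 1) ). -/

import Mathlib

open Real Filter

set_option maxHeartbeats 1000000

/-- Properties of the function `U` from the gun graph: `U` is bounded on `[0,∞)`,
`U(0) = α/d`, `U` has a finite limit at `+∞`, `U(1) = 1` and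
`U′(1) = k(kc + d − α(kc + 1))`. -/
theorem stmt17 (k : ℕ) (hk : 1 ≤ k) (α : ℝ) (hα : α ∈ Set.Ioo (0 : ℝ) 1)
    (a b c d : ℝ) (ha : a ∈ Set.Ioo (0 : ℝ) 1) (hb : b ∈ Set.Ioo (0 : ℝ) 1)
    (hc : c ∈ Set.Ioo (0 : ℝ) 1) (hd : d ∈ Set.Ioo (0 : ℝ) 1)
    (hsum : a + b + c + d = 1)
    (U : ℝ → ℝ)
    (hU : ∀ u : ℝ, U u = (α + (1 - α) * u ^ k) ^ (k + 1) /
      (((a + b) * (α + (1 - α) * u ^ k) ^ k + c) * u ^ k +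
        d * (α + (1 - α) * u ^ k) ^ k)) :
    (∃ M : ℝ, ∀ u : ℝ, 0 ≤ u → |U u| ≤ M) ∧
    U 0 = α / d ∧
    (∃ L : ℝ, Tendsto U atTop (nhds L)) ∧
    U 1 = 1 ∧
    deriv U 1 = k * (k * c + d - α * (k * c + 1)) := by
  obtain ⟨hα0, hα1⟩ := hα
  obtain ⟨ha0, _⟩ := ha
  obtain ⟨hb0, _⟩ := hb
  obtain ⟨hc0, _⟩ := hc
  obtain ⟨hd0, _⟩ := hd
  have hab : 0 < a + b := by linarith
  have h1α : 0 < 1 - α := by linarith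
  have hp : ∀ u : ℝ, 0 ≤ u → 0 < α + (1 - α) * u ^ k := by
    intro u hu
    have := pow_nonneg hu k
    nlinarith
  have hD : ∀ u : ℝ, 0 ≤ u →
      0 < ((a + b) * (α + (1 - α) * u ^ k) ^ k + c) * u ^ k +
        d * (α + (1 - α) * u ^ k) ^ k := by
    intro u hu
    have hpu := hp u hu
    have hpk : 0 < (α + (1 - α) * u ^ k) ^ k := pow_pos hpu k
    have huk : 0 ≤ u ^ k := pow_nonneg hu k
    nlinarith [mul_nonneg (mul_nonneg hab.le hpk.le) huk, mul_pos hd0 hpk,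
      mul_nonneg hc0.le huk]
  refine ⟨?_, ?_, ?_, ?_, ?_⟩
  · -- boundedness
    refine ⟨α / d + (1 - α) / (a + b), fun u hu => ?_⟩
    rw [hU u]
    set p := α + (1 - α) * u ^ k with hpdef
    have hpu := hp u hu
    have hpk : 0 < p ^ k := pow_pos hpu k
    have huk : 0 ≤ u ^ k := pow_nonneg hu k
    have hDu := hD u hu
    have hM : 0 < α / d + (1 - α) / (a + b) := by positivity
    rw [abs_of_nonneg (by positivity)]
    rw [div_le_iff₀ hDu]
    have key : p ≤ (α / d + (1 - α) / (a + b)) * ((a + b) * u ^ k + d) := by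
      have h1 : α ≤ (α / d + (1 - α) / (a + b)) * d := by
        rw [add_mul, div_mul_cancel₀ _ (ne_of_gt hd0)]
        have : 0 ≤ (1 - α) / (a + b) * d := by positivity
        linarith
      have h2 : (1 - α) ≤ (α / d + (1 - α) / (a + b)) * (a + b) := by
        rw [add_mul, div_mul_cancel₀ _ (ne_of_gt hab)]
        have : 0 ≤ α / d * (a + b) := by positivity
        linarith
      have h2' : (1 - α) * u ^ k ≤ (α / d + (1 - α) / (a + b)) * (a + b) * u ^ k :=
        mul_le_mul_of_nonneg_right h2 huk
      nlinarith
    calc p ^ (k + 1) = p * p ^ k := by ring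
    _ ≤ ((α / d + (1 - α) / (a + b)) * ((a + b) * u ^ k + d)) * p ^ k :=
        mul_le_mul_of_nonneg_right key hpk.le
    _ ≤ _ := by nlinarith [mul_nonneg (mul_nonneg hM.le hc0.le) huk]
  · -- U 0 = α / d
    rw [hU 0]
    rw [zero_pow (by omega : k ≠ 0)]
    simp only [mul_zero, add_zero, zero_mul, zero_add]
    rw [pow_succ, mul_comm (α ^ k) α, mul_div_mul_right _ _ (ne_of_gt (pow_pos hα0 k))]
  · -- limit at infinity
    set G : ℝ → ℝ := fun x =>
      (α * x + (1 - α)) ^ (k + 1) /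
        ((a + b) * (α * x + (1 - α)) ^ k + c * x ^ k + d * x * (α * x + (1 - α)) ^ k)
      with hGdef
    have hGcont : ContinuousAt G 0 := by
      apply ContinuousAt.div
      · fun_prop
      · fun_prop
      · have h0 : (0:ℝ) ^ k = 0 := zero_pow (by omega)
        simp only [mul_zero, zero_add, zero_mul, add_zero, h0]
        positivity
    have hpowtop : Tendsto (fun u : ℝ => u ^ k) atTop atTop :=
      tendsto_pow_atTop (by omega)
    have htend : Tendsto (fun u : ℝ => (u ^ k)⁻¹) atTop (nhds 0) :=
      hpowtop.inv_tendsto_atTop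
    have hcomp : Tendsto (fun u : ℝ => G ((u ^ k)⁻¹)) atTop (nhds (G 0)) :=
      hGcont.tendsto.comp htend
    refine ⟨G 0, hcomp.congr' ?_⟩
    filter_upwards [eventually_gt_atTop (0:ℝ)] with u hu
    have hu0 : u ≠ 0 := ne_of_gt hu
    have huk : (0:ℝ) < u ^ k := pow_pos hu k
    have hx : (0:ℝ) < (u ^ k)⁻¹ := by positivity
    have hDu := hD u hu.le
    have hq : (0:ℝ) < α * (u ^ k)⁻¹ + (1 - α) := by positivity
    have hGden : (0:ℝ) < (a + b) * (α * (u ^ k)⁻¹ + (1 - α)) ^ k +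
        c * ((u ^ k)⁻¹) ^ k + d * (u ^ k)⁻¹ * (α * (u ^ k)⁻¹ + (1 - α)) ^ k := by
      positivity
    rw [hU u]
    simp only [hGdef]
    have key : α * (u ^ k)⁻¹ + (1 - α) = (α + (1 - α) * u ^ k) * (u ^ k)⁻¹ := by
      field_simp
    rw [div_eq_div_iff (ne_of_gt hGden) (ne_of_gt hDu), key]
    rw [mul_pow, mul_pow]
    have hik : ((u ^ k)⁻¹) ^ k = (u ^ (k * k))⁻¹ := by
      rw [inv_pow, ← pow_mul]
    have hik1 : ((u ^ k)⁻¹) ^ (k + 1) = (u ^ (k * k + k))⁻¹ := by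
      rw [inv_pow, ← pow_mul, Nat.mul_add, Nat.mul_one]
    rw [hik, hik1]
    field_simp
    ring
  · -- U 1 = 1
    have h1 : α + (1 - α) * (1:ℝ) ^ k = 1 := by rw [one_pow]; ring
    rw [hU 1, h1]
    simp only [one_pow, mul_one]
    rw [hsum]
    norm_num
  · -- derivative
    have hUf : U = fun u => (α + (1 - α) * u ^ k) ^ (k + 1) /
        (((a + b) * (α + (1 - α) * u ^ k) ^ k + c) * u ^ k +
          d * (α + (1 - α) * u ^ k) ^ k) := funext hU
    have hpder : HasDerivAt (fun u : ℝ => α + (1 - α) * u ^ k)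
        ((1 - α) * (k * (1:ℝ) ^ (k - 1))) 1 :=
      ((hasDerivAt_pow k 1).const_mul (1 - α)).const_add α
    have hN : HasDerivAt (fun u : ℝ => (α + (1 - α) * u ^ k) ^ (k + 1))
        ((k + 1 : ℕ) * (α + (1 - α) * (1:ℝ) ^ k) ^ (k + 1 - 1) *
          ((1 - α) * (k * (1:ℝ) ^ (k - 1)))) 1 := hpder.pow (k + 1)
    have hpk : HasDerivAt (fun u : ℝ => (α + (1 - α) * u ^ k) ^ k)
        ((k : ℕ) * (α + (1 - α) * (1:ℝ) ^ k) ^ (k - 1) *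
          ((1 - α) * (k * (1:ℝ) ^ (k - 1)))) 1 := hpder.pow k
    have hterm1 : HasDerivAt
        (fun u : ℝ => ((a + b) * (α + (1 - α) * u ^ k) ^ k + c) * u ^ k)
        (((a + b) * ((k : ℕ) * (α + (1 - α) * (1:ℝ) ^ k) ^ (k - 1) *
            ((1 - α) * (k * (1:ℝ) ^ (k - 1))))) * (1:ℝ) ^ k +
          ((a + b) * (α + (1 - α) * (1:ℝ) ^ k) ^ k + c) * (k * (1:ℝ) ^ (k - 1))) 1 :=
      ((hpk.const_mul (a + b)).add_const c).mul (hasDerivAt_pow k 1)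
    have hterm2 : HasDerivAt (fun u : ℝ => d * (α + (1 - α) * u ^ k) ^ k)
        (d * ((k : ℕ) * (α + (1 - α) * (1:ℝ) ^ k) ^ (k - 1) *
          ((1 - α) * (k * (1:ℝ) ^ (k - 1))))) 1 := hpk.const_mul d
    have hDden := hterm1.add hterm2
    have hone : α + (1 - α) = (1:ℝ) := by ring
    have hne : ((a + b) * (α + (1 - α) * (1:ℝ) ^ k) ^ k + c) * (1:ℝ) ^ k +
        d * (α + (1 - α) * (1:ℝ) ^ k) ^ k ≠ 0 := by
      simp only [one_pow, mul_one, hone]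
      rw [hsum]; norm_num
    have hdiv := hN.div hDden hne
    have hdiv' : HasDerivAt (fun u : ℝ => (α + (1 - α) * u ^ k) ^ (k + 1) /
        (((a + b) * (α + (1 - α) * u ^ k) ^ k + c) * u ^ k +
          d * (α + (1 - α) * u ^ k) ^ k)) _ 1 := hdiv
    rw [hUf, hdiv'.deriv]
    simp only [Pi.add_apply, one_pow, mul_one, hone, one_mul]
    rw [hsum]
    push_cast
    norm_num
    linear_combination (-(k : ℝ) * ((k:ℝ) * (1 - α) + 1)) * hsum
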